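/- Suppose {ν_n} is a sequence of Borel probability measures supported on [0,1] converging weakly to ρ = (1/2)(δ₀ + δ₁), with ν_n({1}) = 0 for all n. Then for any ξ ∈ [0,1] with ξ ≠ 1/2, the sequence {ν̂_n} does not converge uniformly to ρ̂ on the set ξ + ℤ. -/

import Mathlib

open MeasureTheory Filter Topology

/-- Fourier transform of a Borel measure on `ℝ`: `μ̂(ξ) = ∫ e^{-2πiξx} dμ(x)`. -/
noncomputable def FT (μ : Measure ℝ) (ξ : ℝ) : ℂ :=
  ∫ x, Complex.exp (-(2 * (Real.pi : ℂ) * Complex.I) * (ξ : ℂ) * (x : ℂ)) ∂μ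

lemma norm_e (η x : ℝ) : ‖Complex.exp (-(2 * (Real.pi : ℂ) * Complex.I) * (η : ℂ) * (x : ℂ))‖ = 1 := by
  rw [Complex.norm_exp]
  have : (-(2 * (Real.pi : ℂ) * Complex.I) * (η : ℂ) * (x : ℂ)).re = 0 := by simp
  rw [this, Real.exp_zero]

lemma integrable_e (μ : Measure ℝ) [IsFiniteMeasure μ] (η : ℝ) :
    Integrable (fun x : ℝ => Complex.exp (-(2 * (Real.pi : ℂ) * Complex.I) * (η : ℂ) * (x : ℂ))) μ := by
  refine (integrable_const (1:ℝ)).mono' ?_ ?_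
  · exact (Complex.continuous_exp.comp (by continuity)).aestronglyMeasurable
  · filter_upwards with x
    rw [norm_e]


/-- The integral periodic zero set `Z(μ) = {ξ : μ̂(ξ + k) = 0 for all k ∈ ℤ}`. -/
def Zset (μ : Measure ℝ) : Set ℝ := {ξ : ℝ | ∀ k : ℤ, FT μ (ξ + (k : ℝ)) = 0}

/-- `ρ = (1/2)(δ₀ + δ₁)`. -/
noncomputable def rho : Measure ℝ :=
  (2 : ENNReal)⁻¹ • Measure.dirac (0 : ℝ) + (2 : ENNReal)⁻¹ • Measure.dirac (1 : ℝ)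

/-- Weak convergence of a sequence of measures, tested against bounded continuous
functions. -/
def WeakLim (s : ℕ → Measure ℝ) (ν₀ : Measure ℝ) : Prop :=
  ∀ f : BoundedContinuousFunction ℝ ℝ,
    Tendsto (fun n => ∫ x, f x ∂(s n)) atTop (𝓝 (∫ x, f x ∂ν₀))

lemma FT_rho (η : ℝ) : FT rho η = (1/2 : ℂ) * (1 + Complex.exp (-(2 * (Real.pi : ℂ) * Complex.I) * (η : ℂ))) := by
  have hm : StronglyMeasurable (fun x : ℝ => Complex.exp (-(2 * (Real.pi : ℂ) * Complex.I) * (η : ℂ) * (x : ℂ))) :=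
    (Complex.continuous_exp.comp (by continuity)).stronglyMeasurable
  rw [FT, rho, integral_add_measure, integral_smul_measure, integral_smul_measure,
    integral_dirac' _ _ hm, integral_dirac' _ _ hm]
  · push_cast
    simp only [Complex.ofReal_zero, Complex.ofReal_one, mul_zero, mul_one, Complex.exp_zero]
    have : ((2:ENNReal)⁻¹).toReal = (2:ℝ)⁻¹ := by simp
    rw [this, Complex.real_smul, Complex.real_smul]
    push_cast
    ring
  · exact ((integrable_e _ η).smul_measure (by simp))
  · exact ((integrable_e _ η).smul_measure (by simp))

lemma norm_z (x : ℝ) : ‖Complex.exp (-(2 * (Real.pi : ℂ) * Complex.I) * (x : ℂ))‖ = 1 := by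
  rw [Complex.norm_exp]
  have : (-(2 * (Real.pi : ℂ) * Complex.I) * (x : ℂ)).re = 0 := by simp
  rw [this, Real.exp_zero]

lemma key (μ : Measure ℝ) [IsProbabilityMeasure μ] (h1 : μ {1} = 0)
    (hs : μ (Set.Icc (0:ℝ) 1)ᶜ = 0) (ξ : ℝ) :
    Tendsto (fun N : ℕ => ((N:ℂ))⁻¹ * ∑ k ∈ Finset.range N, FT μ (ξ + (k:ℕ)))
      atTop (𝓝 (((μ {0}).toReal : ℂ))) := by
  set z : ℝ → ℂ := fun x => Complex.exp (-(2 * (Real.pi : ℂ) * Complex.I) * (x : ℂ)) with hz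
  set e : ℝ → ℂ := fun x => Complex.exp (-(2 * (Real.pi : ℂ) * Complex.I) * (ξ : ℂ) * (x : ℂ)) with he
  set F : ℕ → ℝ → ℂ := fun N x => ((N:ℂ))⁻¹ * (e x * ∑ k ∈ Finset.range N, (z x) ^ k) with hF
  set h : ℝ → ℂ := fun x => if z x = 1 then e x else 0 with hh
  -- pointwise identity
  have hpt : ∀ (N : ℕ) (x : ℝ), ∑ k ∈ Finset.range N,
      Complex.exp (-(2 * (Real.pi : ℂ) * Complex.I) * ((ξ + (k:ℕ) : ℝ) : ℂ) * (x : ℂ))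
      = e x * ∑ k ∈ Finset.range N, (z x) ^ k := by
    intro N x
    rw [Finset.mul_sum]
    refine Finset.sum_congr rfl fun k _ => ?_
    rw [he, hz]
    rw [← Complex.exp_nat_mul, ← Complex.exp_add]
    congr 1
    push_cast
    ring
  -- rewrite averages as integrals
  have hrw : ∀ N : ℕ, ((N:ℂ))⁻¹ * ∑ k ∈ Finset.range N, FT μ (ξ + (k:ℕ))
      = ∫ x, F N x ∂μ := by
    intro N
    rw [hF]
    simp only [FT]
    rw [← integral_finset_sum _ (fun k _ => integrable_e μ (ξ + (k:ℕ))),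
      ← integral_const_mul]
    refine integral_congr_ae (Filter.Eventually.of_forall fun x => ?_)
    dsimp only
    rw [hpt N x]
  have hnormz : ∀ x : ℝ, ‖z x‖ = 1 := norm_z
  have hnorme : ∀ x : ℝ, ‖e x‖ = 1 := norm_e ξ
  -- dominated convergence
  have hDCT : Tendsto (fun N => ∫ x, F N x ∂μ) atTop (𝓝 (∫ x, h x ∂μ)) := by
    refine tendsto_integral_of_dominated_convergence (fun _ => (1:ℝ)) ?_ (integrable_const 1) ?_ ?_
    · intro N
      apply Continuous.aestronglyMeasurable
      apply continuous_const.mul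
      apply (Complex.continuous_exp.comp (by continuity)).mul
      apply continuous_finset_sum
      intro k _
      exact (Complex.continuous_exp.comp (by continuity)).pow k
    · intro N
      filter_upwards with x
      rw [norm_mul, norm_mul, hnorme, one_mul]
      calc ‖((N:ℂ))⁻¹‖ * ‖∑ k ∈ Finset.range N, (z x) ^ k‖
          ≤ ‖((N:ℂ))⁻¹‖ * ∑ k ∈ Finset.range N, ‖(z x) ^ k‖ := by
            gcongr; exact norm_sum_le _ _
        _ = ((N:ℝ))⁻¹ * N := by
            rw [norm_inv]
            congr 1
            · rw [Complex.norm_natCast]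
            · rw [Finset.sum_congr rfl fun k _ => by rw [norm_pow, hnormz, one_pow]]
              simp
        _ ≤ 1 := by
            rcases Nat.eq_zero_or_pos N with h | h
            · simp [h]
            · rw [inv_mul_cancel₀ (by positivity)]
    · filter_upwards with x
      rw [hF, hh]
      by_cases hx : z x = 1
      · simp only [hx, one_pow, if_true]
        refine tendsto_const_nhds.congr' ?_
        filter_upwards [eventually_ge_atTop 1] with N hN
        have hN0 : ((N:ℂ)) ≠ 0 := Nat.cast_ne_zero.mpr (by omega)
        rw [Finset.sum_const, Finset.card_range, nsmul_eq_mul, mul_one, mul_comm (e x) ((N:ℂ)),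
          ← mul_assoc, inv_mul_cancel₀ hN0, one_mul]
      · dsimp only
        rw [if_neg hx]
        apply squeeze_zero_norm (a := fun N : ℕ => ((N:ℝ))⁻¹ * (2 / ‖z x - 1‖))
        · intro N
          rw [norm_mul, norm_mul, hnorme, one_mul, norm_inv, Complex.norm_natCast]
          gcongr
          rw [geom_sum_eq hx, norm_div]
          have hnum : ‖(z x) ^ N - 1‖ ≤ 2 :=
            calc ‖(z x) ^ N - 1‖ ≤ ‖(z x) ^ N‖ + ‖(1:ℂ)‖ := norm_sub_le _ _
              _ = 2 := by rw [norm_pow, hnormz, one_pow, norm_one]; norm_num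
          gcongr
        · have h0 := tendsto_inv_atTop_nhds_zero_nat.mul_const (2 / ‖z x - 1‖)
          simpa using h0
  -- compute ∫ h
  have hint : ∫ x, h x ∂μ = ((μ {0}).toReal : ℂ) := by
    have hae : h =ᵐ[μ] Set.indicator {(0:ℝ)} (fun _ => (1:ℂ)) := by
      rw [Filter.eventuallyEq_iff_exists_mem]
      refine ⟨({(1:ℝ)} ∪ (Set.Icc (0:ℝ) 1)ᶜ)ᶜ, ?_, ?_⟩
      · rw [mem_ae_iff, compl_compl]
        exact le_antisymm (le_trans (measure_union_le _ _) (by rw [h1, hs]; simp)) zero_le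
      · intro x hx
        simp only [Set.mem_compl_iff, Set.mem_union, not_or, not_not] at hx
        obtain ⟨hx1, hxI⟩ := hx
        rw [hh]
        by_cases hx0 : x = 0
        · subst hx0
          simp only [hz, he]
          norm_num [Set.indicator_of_mem]
        · rw [Set.indicator_of_notMem (by simpa using hx0)]
          show (if z x = 1 then e x else 0) = 0
          rw [if_neg]
          intro hc
          rw [hz, Complex.exp_eq_one_iff] at hc
          obtain ⟨n, hn⟩ := hc
          have h2πi : (2 * (Real.pi:ℂ) * Complex.I) ≠ 0 := by
            simp [Real.pi_ne_zero, Complex.I_ne_zero]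
          have hxn : (x:ℂ) = ((-n : ℤ) : ℂ) := by
            have h2 : ((x:ℂ)) * (2 * (Real.pi:ℂ) * Complex.I)
                = ((-n:ℤ):ℂ) * (2 * (Real.pi:ℂ) * Complex.I) := by
              push_cast
              linear_combination -hn
            exact mul_right_cancel₀ h2πi h2
          have hxr : x = ((-n : ℤ) : ℝ) := by
            exact_mod_cast hxn
          have : ((-n:ℤ):ℝ) ∈ Set.Icc (0:ℝ) 1 := hxr ▸ hxI
          have hne0 : (-n : ℤ) ≠ 0 := by
            intro hc0
            apply hx0
            rw [hxr, hc0]; simp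
          have hne1 : ((-n:ℤ):ℝ) ≠ 1 := by
            rw [← hxr]
            simpa using hx1
          obtain ⟨hl, hr⟩ := this
          have hl' : (0:ℤ) ≤ -n := by exact_mod_cast hl
          have hr' : (-n:ℤ) ≤ 1 := by exact_mod_cast hr
          interval_cases h : (-n : ℤ) <;> simp_all
    rw [integral_congr_ae hae, integral_indicator (measurableSet_singleton 0),
      setIntegral_const, Complex.real_smul, mul_one]
    rfl
  rw [← hint]
  exact hDCT.congr fun N => (hrw N).symm

lemma rho_integral (f : BoundedContinuousFunction ℝ ℝ) :
    ∫ x, f x ∂rho = (f 0 + f 1) / 2 := by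
  have hm := f.continuous.stronglyMeasurable
  rw [rho, integral_add_measure, integral_smul_measure, integral_smul_measure,
    integral_dirac' _ _ hm, integral_dirac' _ _ hm]
  · have : ((2:ENNReal)⁻¹).toReal = (2:ℝ)⁻¹ := by simp
    rw [this, smul_eq_mul, smul_eq_mul]
    ring
  · exact (f.integrable _).smul_measure (by simp)
  · exact (f.integrable _).smul_measure (by simp)


lemma endpoint_case (ν : ℕ → Measure ℝ) (hprob : ∀ n, IsProbabilityMeasure (ν n))
    (hconv : WeakLim ν rho)
    (hA : Tendsto (fun n => (((ν n) {0}).toReal : ℂ)) atTop (𝓝 1)) : False := by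
  have hAr : Tendsto (fun n => ((ν n) {0}).toReal) atTop (𝓝 1) := by
    have h := (Complex.continuous_re.tendsto 1).comp hA
    simpa [Function.comp_def] using h
  set g : ℝ → ℝ := fun x => max 0 (1 - |x|) with hg
  have hmem : ∀ x : ℝ, g x ∈ Set.Icc (0:ℝ) 1 := by
    intro x
    constructor
    · exact le_max_left _ _
    · apply max_le (by norm_num)
      have := abs_nonneg x
      linarith
  set f : BoundedContinuousFunction ℝ ℝ :=
    BoundedContinuousFunction.mkOfBound ⟨g, by
      rw [hg]; exact continuous_const.max (continuous_const.sub continuous_abs)⟩ 1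
      (fun x y => by
        have := Real.dist_le_of_mem_Icc (hmem x) (hmem y)
        simpa using this) with hf
  have hf0 : f 0 = 1 := by simp [hf, hg]
  have hf1 : f 1 = 0 := by simp [hf, hg]
  have hrho : ∫ x, f x ∂rho = 1/2 := by
    rw [rho_integral, hf0, hf1]; norm_num
  have hlow : ∀ n, ((ν n) {0}).toReal ≤ ∫ x, f x ∂(ν n) := by
    intro n
    have heq : ((ν n) {0}).toReal = ∫ x, Set.indicator {(0:ℝ)} (fun _ => (1:ℝ)) x ∂(ν n) := by
      rw [integral_indicator (measurableSet_singleton 0), setIntegral_const, smul_eq_mul, mul_one]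
      rfl
    rw [heq]
    refine integral_mono ((integrable_const (1:ℝ)).indicator (measurableSet_singleton 0))
      (f.integrable _) ?_
    intro x
    by_cases hx : x = 0
    · subst hx
      rw [Set.indicator_of_mem (by simp)]
      rw [show f 0 = 1 from hf0]
    · rw [Set.indicator_of_notMem (by simpa using hx)]
      exact (hmem x).1
  have hle := le_of_tendsto_of_tendsto' hAr (hconv f) hlow
  rw [hrho] at hle
  linarith

/-- If probability measures `ν_n` on `[0,1]` with `ν_n({1}) = 0` converge weakly to
`ρ = (1/2)(δ₀+δ₁)`, then for any `ξ ∈ [0,1]` with `ξ ≠ 1/2`, the Fourier transforms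
`ν̂_n` do not converge uniformly to `ρ̂` on the set `ξ + ℤ`. -/
theorem stmt14 (ν : ℕ → Measure ℝ)
    (hprob : ∀ n, IsProbabilityMeasure (ν n))
    (hsupp : ∀ n, ν n (Set.Icc (0 : ℝ) 1)ᶜ = 0)
    (hone : ∀ n, ν n {1} = 0)
    (hconv : WeakLim ν rho)
    (ξ : ℝ) (hξ : ξ ∈ Set.Icc (0 : ℝ) 1) (hhalf : ξ ≠ 1/2) :
    ¬ TendstoUniformlyOn (fun n x => FT (ν n) x) (FT rho) atTop
        {x : ℝ | ∃ k : ℤ, x = ξ + (k : ℝ)} := by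
  intro hU
  set c₀ : ℂ := (1/2 : ℂ) * (1 + Complex.exp (-(2 * (Real.pi : ℂ) * Complex.I) * (ξ : ℂ))) with hc
  have hconst : ∀ k : ℤ, FT rho (ξ + (k:ℝ)) = c₀ := by
    intro k
    rw [FT_rho, hc]
    congr 2
    have h1 : (-(2 * (Real.pi : ℂ) * Complex.I)) * (((ξ + (k:ℝ)):ℝ) : ℂ)
        = (-(2 * (Real.pi : ℂ) * Complex.I)) * (ξ : ℂ) + ((-k : ℤ) : ℂ) * (2 * Real.pi * Complex.I) := by
      push_cast; ring
    rw [h1, Complex.exp_add, Complex.exp_int_mul_two_pi_mul_I, mul_one]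
  -- ν_n {0} tends to c₀
  have hA : Tendsto (fun n => (((ν n) {0}).toReal : ℂ)) atTop (𝓝 c₀) := by
    rw [Metric.tendsto_atTop]
    intro ε hε
    rw [Metric.tendstoUniformlyOn_iff] at hU
    obtain ⟨N₀, hN₀⟩ := (hU (ε/2) (by positivity)).exists_forall_of_atTop
    refine ⟨N₀, fun n hn => ?_⟩
    have hd : ∀ k : ℕ, ‖FT (ν n) (ξ + (k:ℕ)) - c₀‖ ≤ ε/2 := by
      intro k
      have hmem : (ξ + ((k:ℤ):ℝ)) ∈ {x : ℝ | ∃ j : ℤ, x = ξ + (j : ℝ)} := ⟨k, rfl⟩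
      have := hN₀ n hn _ hmem
      rw [hconst k, dist_eq_norm] at this
      have h2 : (ξ + ((k:ℤ):ℝ)) = ξ + (k:ℕ) := by push_cast; ring
      rw [h2] at this
      rw [norm_sub_rev]
      linarith
    -- average bound
    have havg : ∀ N : ℕ, 1 ≤ N →
        ‖((N:ℂ))⁻¹ * ∑ k ∈ Finset.range N, FT (ν n) (ξ + (k:ℕ)) - c₀‖ ≤ ε/2 := by
      intro N hN
      have hN0 : ((N:ℂ)) ≠ 0 := Nat.cast_ne_zero.mpr (by omega)
      have h3 : ((N:ℂ))⁻¹ * ∑ k ∈ Finset.range N, FT (ν n) (ξ + (k:ℕ)) - c₀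
          = ((N:ℂ))⁻¹ * ∑ k ∈ Finset.range N, (FT (ν n) (ξ + (k:ℕ)) - c₀) := by
        rw [Finset.sum_sub_distrib, mul_sub, Finset.sum_const, Finset.card_range,
          nsmul_eq_mul, ← mul_assoc, inv_mul_cancel₀ hN0, one_mul]
      rw [h3, norm_mul, norm_inv, Complex.norm_natCast]
      calc ((N:ℝ))⁻¹ * ‖∑ k ∈ Finset.range N, (FT (ν n) (ξ + (k:ℕ)) - c₀)‖
          ≤ ((N:ℝ))⁻¹ * ∑ k ∈ Finset.range N, ‖FT (ν n) (ξ + (k:ℕ)) - c₀‖ := by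
            gcongr; exact norm_sum_le _ _
        _ ≤ ((N:ℝ))⁻¹ * ∑ k ∈ Finset.range N, (ε/2) := by
            gcongr with k hk
            exact hd k
        _ = ((N:ℝ))⁻¹ * (N * (ε/2)) := by rw [Finset.sum_const, Finset.card_range, nsmul_eq_mul]
        _ = ε/2 := by
            rw [← mul_assoc, inv_mul_cancel₀ (by exact_mod_cast hN0), one_mul]
    have hkey := key (ν n) (hone n) (hsupp n) ξ
    have hlim : ‖(((ν n) {0}).toReal : ℂ) - c₀‖ ≤ ε/2 := by
      have ht : Tendsto (fun N : ℕ => ‖((N:ℂ))⁻¹ * ∑ k ∈ Finset.range N, FT (ν n) (ξ + (k:ℕ)) - c₀‖)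
          atTop (𝓝 ‖(((ν n) {0}).toReal : ℂ) - c₀‖) := ((hkey.sub tendsto_const_nhds).norm)
      refine le_of_tendsto ht ?_
      filter_upwards [eventually_ge_atTop 1] with N hN using havg N hN
    rw [dist_eq_norm]
    linarith
  -- case analysis
  obtain ⟨hξ0, hξ1⟩ := hξ
  rcases eq_or_lt_of_le hξ0 with h0 | h0
  · -- ξ = 0 : c₀ = 1
    have hc1 : c₀ = 1 := by rw [hc, ← h0]; simp; norm_num
    rw [hc1] at hA
    exact endpoint_case ν hprob hconv hA
  · rcases eq_or_lt_of_le hξ1 with h1 | h1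
    · -- ξ = 1 : c₀ = 1
      have hc1 : c₀ = 1 := by
        rw [hc, h1]
        have : (-(2 * (Real.pi : ℂ) * Complex.I)) * ((1:ℝ) : ℂ) = ((-1 : ℤ) : ℂ) * (2 * Real.pi * Complex.I) := by
          push_cast; ring
        rw [this, Complex.exp_int_mul_two_pi_mul_I]
        norm_num
      rw [hc1] at hA
      exact endpoint_case ν hprob hconv hA
    · -- 0 < ξ < 1, ξ ≠ 1/2 : Im c₀ ≠ 0
      have him : c₀.im = 0 := by
        have h2 : Tendsto (fun n => (((ν n) {0}).toReal : ℂ).im) atTop (𝓝 c₀.im) :=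
          (Complex.continuous_im.tendsto c₀).comp hA
        have h3 : (fun n => (((ν n) {0}).toReal : ℂ).im) = fun _ => (0:ℝ) := by
          funext n; exact Complex.ofReal_im _
        rw [h3] at h2
        exact tendsto_nhds_unique h2 tendsto_const_nhds
      have h4 : c₀.im = Real.sin (-(2 * Real.pi * ξ)) / 2 := by
        rw [hc]
        have h5 : (-(2 * (Real.pi : ℂ) * Complex.I)) * (ξ : ℂ) = ((-(2 * Real.pi * ξ) : ℝ) : ℂ) * Complex.I := by
          push_cast; ring
        have h6 : (1 + Complex.exp (((-(2*Real.pi*ξ) : ℝ) : ℂ) * Complex.I)).im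
            = Real.sin (-(2*Real.pi*ξ)) := by
          rw [Complex.add_im, Complex.one_im, Complex.exp_ofReal_mul_I_im, zero_add]
        have h7 : (1/2 : ℂ) = (((1:ℝ)/2 : ℝ) : ℂ) := by norm_num
        rw [h5, h7, Complex.mul_im, Complex.ofReal_re, Complex.ofReal_im, h6, zero_mul,
          add_zero]
        ring
      rw [h4] at him
      have h6 : Real.sin (-(2 * Real.pi * ξ)) = 0 := by linarith
      rw [Real.sin_eq_zero_iff] at h6
      obtain ⟨m, hm⟩ := h6
      have hπ : (0:ℝ) < Real.pi := Real.pi_pos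
      have hξval : ξ = (-m : ℤ) / 2 := by
        have : (m:ℝ) * Real.pi = -(2 * Real.pi * ξ) := hm
        push_cast
        nlinarith [this]
      have hm0 : (0:ℝ) < (-m:ℤ) := by
        rw [hξval] at h0; push_cast at h0 ⊢; linarith
      have hm2 : ((-m:ℤ):ℝ) < 2 := by
        rw [hξval] at h1; push_cast at h1 ⊢; linarith
      have : (-m : ℤ) = 1 := by
        have ha : (0:ℤ) < -m := by exact_mod_cast hm0
        have hb : (-m:ℤ) < 2 := by exact_mod_cast hm2
        omega
      apply hhalf
      rw [hξval, this]
      norm_num
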